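/- For every p ∈ ℚ with p² ≠ 12, set a = (27/8)·(p² - 12p + 12)²/(p² - 12)², b = a, D = -4a³ - 27a², t = -(1/2)·(p² - 12p + 12)/(p² - 12), a₀ = (-243/32)·(p² - 12p + 12)³(p² - 4p + 12)/(p² - 12)⁴, a₁ = (81/8)·(p² - 12p + 12)²(p² - 4p + 12)/(p² - 12)³, and a₂ = 0. Then f₅ = 0, g₅ = 0, and h₅ = 0. -/
import Mathlib

/-- The genus-zero curve on the surface `S_{a,5}` from the proof of
Proposition 7.3 of the paper: the parametrised point satisfies the defining
equations `f₅ = g₅ = h₅ = 0` of `X⁵_E(8)`. -/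
theorem stmt_16 (p a b D t a₀ a₁ a₂ : ℚ) (hp : p ^ 2 ≠ 12)
    (ha : a = 27 / 8 * (p ^ 2 - 12 * p + 12) ^ 2 / (p ^ 2 - 12) ^ 2)
    (hb : b = a)
    (hD : D = -4 * a ^ 3 - 27 * a ^ 2)
    (ht : t = -(1 / 2) * (p ^ 2 - 12 * p + 12) / (p ^ 2 - 12))
    (ha₀ : a₀ = -243 / 32 * (p ^ 2 - 12 * p + 12) ^ 3 * (p ^ 2 - 4 * p + 12) / (p ^ 2 - 12) ^ 4)
    (ha₁ : a₁ = 81 / 8 * (p ^ 2 - 12 * p + 12) ^ 2 * (p ^ 2 - 4 * p + 12) / (p ^ 2 - 12) ^ 3)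
    (ha₂ : a₂ = 0) :
    -a * a₂ ^ 2 + 2 * a₀ * a₂ + a₁ ^ 2 + 2 * D / 9 = 0 ∧
    -2 * a * a₁ * a₂ - b * a₂ ^ 2 + 2 * a₀ * a₁ + 2 * D / 3 * t = 0 ∧
    -2 * b * a₁ * a₂ + a₀ ^ 2 + D * (-t ^ 2 + a / 9) = 0 := by
  have h : p ^ 2 - 12 ≠ 0 := sub_ne_zero.mpr hp
  subst ha₂ hb hD ht ha₀ ha₁ ha
  refine ⟨?_, ?_, ?_⟩ <;> field_simp <;> ring
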